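/- Suppose the family Υ_n is admissible relative to the sets Ω(n,m) for G ↷ (X,ν). Let f : X × ℝ → ℝ be a bounded continuous function and define Var_{n,m}(f) = sup{|f(x,t) − f(y,t)| : x,y ∈ X, t ∈ ℝ, d(x,y) < f_m(n)}. Then: (a) (W_{n,m}f)(b,t) = 0 whenever b ∉ Ω(n,m); and (b) for every b ∈ Ω(n,m) and every t ∈ ℝ, |(W_{n,m}f)(b,t) − f(b,t)| ≤ Var_{n,m}(f). Consequently ‖W_{n,m}f − f‖_{L¹(ν×θ)} ≤ Var_{n,m}(f) + D(m)‖f‖_∞. -/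

import Mathlib

open MeasureTheory Filter Metric Set
open scoped ENNReal

namespace StableRatio

variable {G : Type*} [Group G] [Countable G]

/-- The Radon–Nikodym derivative `d(ν∘g)/dν`, where `(ν∘g)(A) = ν(gA)`,
so that `ν∘g` is the pushforward of `ν` under the action of `g⁻¹`. -/
noncomputable def RN {Z : Type*} [MeasurableSpace Z] (act : G → Z → Z) (ν : Measure Z)
    (g : G) (z : Z) : ℝ :=
  ((ν.map (act g⁻¹)).rnDeriv ν z).toReal

/-- `R(g,η) = log (d(ν∘g)/dν)(η)`. -/
noncomputable def Rlog {Z : Type*} [MeasurableSpace Z] (act : G → Z → Z) (ν : Measure Z)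
    (g : G) (z : Z) : ℝ :=
  Real.log (RN act ν g z)

/-- A family of functions `Υ n : G → Z → Z → ℝ` is admissible relative to a family of
closed subsets `Ω n m ⊆ Z`, with constants `D C : ℕ → ℝ`, `N : ℕ → ℕ` and moduli
`fbd : ℕ → ℕ → ℝ`.  Here `dZ` is the metric on `Z` and `act` the (quasi-invariant)
action of `G` on `(Z,ν)`. -/
structure IsRelAdmissible {Z : Type*} [MeasurableSpace Z] [TopologicalSpace Z]
    (act : G → Z → Z) (dZ : Z → Z → ℝ) (ν : Measure Z) [SFinite ν]
    (Υ : ℕ → G → Z → Z → ℝ) (Ω : ℕ → ℕ → Set Z)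
    (D C : ℕ → ℝ) (N : ℕ → ℕ) (fbd : ℕ → ℕ → ℝ) : Prop where
  meas_Υ : ∀ (n : ℕ) (g : G), Measurable (Function.uncurry (Υ n g))
  nonneg_Υ : ∀ (n : ℕ) (g : G) (b b' : Z), 0 ≤ Υ n g b b'
  closed_Ω : ∀ n m : ℕ, IsClosed (Ω n m)
  D_pos : ∀ m : ℕ, 0 < D m
  D_lim : Tendsto D atTop (nhds 0)
  Ω_big : ∀ n m : ℕ, ENNReal.ofReal (1 - D m) < ν (Ω n m)
  f_lim : ∀ m : ℕ, Tendsto (fbd m) atTop (nhds 0)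
  close : ∀ (n m : ℕ) (g : G) (b b' : Z), b ∈ Ω n m → 0 < Υ n g b b' →
    dZ b b' < fbd m n ∧ dZ (act g⁻¹ b) (act g⁻¹ b') < fbd m n
  C_pos : ∀ m : ℕ, 0 < C m
  N_pos : ∀ m : ℕ, 0 < N m
  R_bound : ∀ (m n : ℕ), N m < n → ∀ g : G, ∀ᵐ p ∂(ν.prod ν),
    p.1 ∈ Ω n m → 0 < Υ n g p.1 p.2 →
      (|Rlog act ν g⁻¹ p.1| + |Rlog act ν g⁻¹ p.2| < C m ∧
        1 / C m ≤ |Rlog act ν g⁻¹ p.1 - Rlog act ν g⁻¹ p.2|)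
  normalized : ∀ (n : ℕ) (b : Z),
    (∑' g : G, ∫⁻ b', ENNReal.ofReal (Υ n g b b') ∂ν) = 1
  bdd₁ : ∀ (m n : ℕ), N m < n → ∀ᵐ b' ∂ν,
    (∫⁻ b in Ω n m, ∑' g : G, ENNReal.ofReal (Υ n g b b') ∂ν) ≤ ENNReal.ofReal (C m)
  bdd₂ : ∀ (m n : ℕ), N m < n → ∀ᵐ b' ∂ν,
    (∫⁻ b in Ω n m, ∑' g : G, ENNReal.ofReal (Υ n g b (act g b') * RN act ν g b') ∂ν)
      ≤ ENNReal.ofReal (C m)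
  bdd₃ : ∀ (m n : ℕ), N m < n → ∀ᵐ b ∂ν,
    (∫⁻ b', ∑' g : G, Set.indicator (Ω n m) (fun _ => (1 : ℝ≥0∞)) (act g b)
        * ENNReal.ofReal (Υ n g (act g b) b' * RN act ν g b') ∂ν) ≤ ENNReal.ofReal (C m)

/-- The measure `θ` on `ℝ` with `dθ = (1/2) e^{-|t|} dt`. -/
noncomputable def theta : Measure ℝ :=
  MeasureTheory.volume.withDensity (fun t : ℝ => ENNReal.ofReal ((1 / 2) * Real.exp (-|t|)))

instance : SFinite theta := by unfold theta; infer_instance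

/-- The measure `ζ_{n,m}` on `ℝ`:
`ζ_{n,m}(E) = Σ_{g∈G} ∫∫ 1_E(R(g⁻¹,b') − R(g⁻¹,b)) 1_{Ω(n,m)}(b) Υ_n(g,b,b') dν(b) dν(b')`. -/
noncomputable def zeta {Z : Type*} [MeasurableSpace Z] (act : G → Z → Z) (ν : Measure Z)
    [SFinite ν] (Υ : ℕ → G → Z → Z → ℝ) (Ω : ℕ → ℕ → Set Z) (n m : ℕ) : Measure ℝ :=
  Measure.sum fun g : G =>
    ((ν.prod ν).withDensity fun p =>
        Set.indicator (Ω n m) (fun _ => (1 : ℝ≥0∞)) p.1 * ENNReal.ofReal (Υ n g p.1 p.2)).map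
      fun p => Rlog act ν g⁻¹ p.2 - Rlog act ν g⁻¹ p.1

/-- The measure `ζ_{n,b}` on `ℝ`:
`ζ_{n,b}(E) = Σ_{g∈G} ∫ 1_E(R(g⁻¹,b') − R(g⁻¹,b)) Υ_n(g,b,b') dν(b')`. -/
noncomputable def zetaB {Z : Type*} [MeasurableSpace Z] (act : G → Z → Z) (ν : Measure Z)
    (Υ : ℕ → G → Z → Z → ℝ) (n : ℕ) (b : Z) : Measure ℝ :=
  Measure.sum fun g : G =>
    (ν.withDensity fun b' => ENNReal.ofReal (Υ n g b b')).map
      fun b' => Rlog act ν g⁻¹ b' - Rlog act ν g⁻¹ b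

/-- `μ` is a weak-* limit point of the sequence `μs`, i.e. the limit of some subsequence
in the weak-* topology (integration against bounded continuous functions). -/
def WeakStarLimitPoint (μs : ℕ → Measure ℝ) (μ : Measure ℝ) : Prop :=
  ∃ φ : ℕ → ℕ, StrictMono φ ∧
    ∀ f : BoundedContinuousFunction ℝ ℝ,
      Tendsto (fun k => ∫ x, f x ∂(μs (φ k))) atTop (nhds (∫ x, f x ∂μ))

/-- `T` belongs to the (topological) support of the measure `μ` on `ℝ`. -/
def MemSupport (μ : Measure ℝ) (T : ℝ) : Prop :=
  ∀ ε : ℝ, 0 < ε → 0 < μ (Metric.ball T ε)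

/-- `r` belongs to the ratio set of the action `act` of `G` on `(Z,μ)`. -/
def InRatioSet {Z : Type*} [MeasurableSpace Z] (act : G → Z → Z) (μ : Measure Z)
    (r : ℝ) : Prop :=
  ∀ A : Set Z, MeasurableSet A → 0 < μ A → ∀ ε : ℝ, 0 < ε →
    ∃ A' : Set Z, MeasurableSet A' ∧ A' ⊆ A ∧ 0 < μ A' ∧
      ∃ g : G, g ≠ 1 ∧ act g '' A' ⊆ A ∧ ∀ b ∈ A', |RN act μ g b - r| ≤ ε

/-- `r` belongs to the stable ratio set of the action `act` of `G` on `(Z,ν)`: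
`r` is in the ratio set of the product of the action with every probability
measure preserving action of `G`. -/
def InStableRatioSet {Z : Type*} [MeasurableSpace Z] (act : G → Z → Z) (ν : Measure Z)
    [SFinite ν] (r : ℝ) : Prop :=
  ∀ (Y : Type) [MeasurableSpace Y] (κ : Measure Y) [IsProbabilityMeasure κ]
    (aY : G → Y → Y),
    (∀ g : G, Measurable (aY g)) → aY 1 = id →
    (∀ g h : G, aY (g * h) = aY g ∘ aY h) →
    (∀ g : G, κ.map (aY g) = κ) →
    InRatioSet (fun g (p : Z × Y) => (act g p.1, aY g p.2)) (ν.prod κ) r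

/-- The operator `W_{n,m}`. -/
noncomputable def Wop {Z : Type*} [MeasurableSpace Z] (ν : Measure Z)
    (Υ : ℕ → G → Z → Z → ℝ) (Ω : ℕ → ℕ → Set Z) (n m : ℕ)
    (f : Z → ℝ → ℝ) (b : Z) (t : ℝ) : ℝ :=
  ∑' g : G, ∫ b', Set.indicator (Ω n m) (fun _ => (1 : ℝ)) b * Υ n g b b' * f b' t ∂ν

/-- The operator `X_{n,m}`. -/
noncomputable def Xop {Z : Type*} [MeasurableSpace Z] (act : G → Z → Z) (ν : Measure Z)
    (Υ : ℕ → G → Z → Z → ℝ) (Ω : ℕ → ℕ → Set Z) (n m : ℕ)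
    (f : Z → ℝ → ℝ) (b : Z) (t : ℝ) : ℝ :=
  ∑' g : G, ∫ b', Set.indicator (Ω n m) (fun _ => (1 : ℝ)) b * Υ n g b b' *
      f (act g⁻¹ b') (t + Rlog act ν g⁻¹ b') ∂ν

/-- The operator `Y_{n,m}`. -/
noncomputable def Yop {Z : Type*} [MeasurableSpace Z] (act : G → Z → Z) (ν : Measure Z)
    (Υ : ℕ → G → Z → Z → ℝ) (Ω : ℕ → ℕ → Set Z) (n m : ℕ)
    (f : Z → ℝ → ℝ) (b : Z) (t : ℝ) : ℝ :=
  ∑' g : G, ∫ b', Set.indicator (Ω n m) (fun _ => (1 : ℝ)) b * Υ n g b b' *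
      f (act g⁻¹ b) (t + Rlog act ν g⁻¹ b') ∂ν

/-- The operator `L_{n,m}`. -/
noncomputable def Lop {Z : Type*} [MeasurableSpace Z] (act : G → Z → Z) (ν : Measure Z)
    (Υ : ℕ → G → Z → Z → ℝ) (Ω : ℕ → ℕ → Set Z) (n m : ℕ)
    (f : Z → ℝ → ℝ) (b : Z) (t : ℝ) : ℝ :=
  ∑' g : G, ∫ b', Set.indicator (Ω n m) (fun _ => (1 : ℝ)) b * Υ n g b b' *
      f b (t + Rlog act ν g⁻¹ b' - Rlog act ν g⁻¹ b) ∂ν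

lemma exp_neg_abs_integrable : Integrable (fun x : ℝ => Real.exp (-|x|)) := by
  have h1 : IntegrableOn (fun x : ℝ => Real.exp (-|x|)) (Set.Iic 0) := by
    refine (integrableOn_exp_Iic 0).congr_fun (fun x hx => ?_) measurableSet_Iic
    simp [abs_of_nonpos (show x ≤ 0 from hx)]
  have h2 : IntegrableOn (fun x : ℝ => Real.exp (-|x|)) (Set.Ioi 0) := by
    refine ((exp_neg_integrableOn_Ioi 0 one_pos).congr_fun (fun x hx => ?_) measurableSet_Ioi)
    simp [abs_of_pos (show (0:ℝ) < x from hx)]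
  have := h1.union h2
  rwa [Set.Iic_union_Ioi, integrableOn_univ] at this

lemma integral_exp_neg_abs : ∫ x : ℝ, Real.exp (-|x|) = 2 := by
  have hmeas : MeasurableSet (Set.Iic (0:ℝ)) := measurableSet_Iic
  rw [← integral_add_compl hmeas exp_neg_abs_integrable, Set.compl_Iic]
  have e1 : ∫ x in Set.Iic (0:ℝ), Real.exp (-|x|) = 1 := by
    rw [setIntegral_congr_fun hmeas (g := Real.exp) (fun x hx => by
      simp [abs_of_nonpos (show x ≤ 0 from hx)])]
    exact integral_exp_Iic_zero
  have e2 : ∫ x in Set.Ioi (0:ℝ), Real.exp (-|x|) = 1 := by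
    rw [setIntegral_congr_fun measurableSet_Ioi (g := fun x => Real.exp (-x)) (fun x hx => by
      simp [abs_of_pos (show (0:ℝ) < x from hx)])]
    exact integral_exp_neg_Ioi_zero
  rw [e1, e2]; norm_num

instance theta_isProbability : IsProbabilityMeasure theta := by
  constructor
  unfold theta
  rw [withDensity_apply _ MeasurableSet.univ, setLIntegral_univ,
    ← ofReal_integral_eq_lintegral_ofReal
      (exp_neg_abs_integrable.const_mul _)
      (Filter.Eventually.of_forall fun x => by positivity)]
  rw [integral_const_mul, integral_exp_neg_abs]
  norm_num

theorem stmt19 {G X : Type*} [Group G] [Countable G]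
    [MetricSpace X] [CompactSpace X] [MeasurableSpace X] [BorelSpace X]
    (act : G → X → X) (hact_one : act 1 = id)
    (hact_mul : ∀ g h : G, act (g * h) = act g ∘ act h)
    (hact_meas : ∀ g : G, Measurable (act g))
    (ν : Measure X) [IsProbabilityMeasure ν]
    (hqi : ∀ g : G, ν.map (act g) ≪ ν ∧ ν ≪ ν.map (act g))
    (Υ : ℕ → G → X → X → ℝ) (Ω : ℕ → ℕ → Set X)
    (D C : ℕ → ℝ) (N : ℕ → ℕ) (fbd : ℕ → ℕ → ℝ)
    (hadm : IsRelAdmissible act (fun a b : X => dist a b) ν Υ Ω D C N fbd) :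
    ∀ n m : ℕ, ∀ f : BoundedContinuousFunction (X × ℝ) ℝ,
      (∀ b : X, ∀ t : ℝ, b ∉ Ω n m → Wop ν Υ Ω n m (Function.curry ⇑f) b t = 0) ∧
      (∀ b ∈ Ω n m, ∀ t : ℝ,
        |Wop ν Υ Ω n m (Function.curry ⇑f) b t - f (b, t)|
          ≤ sSup {v : ℝ | ∃ (x y : X) (s : ℝ), dist x y < fbd m n ∧ v = |f (x, s) - f (y, s)|}) ∧
      ∫ p, |Wop ν Υ Ω n m (Function.curry ⇑f) p.1 p.2 - f p| ∂(ν.prod theta)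
        ≤ sSup {v : ℝ | ∃ (x y : X) (s : ℝ), dist x y < fbd m n ∧ v = |f (x, s) - f (y, s)|}
          + D m * ‖f‖ := by
  intro n m f
  set S : Set ℝ := {v : ℝ | ∃ (x y : X) (s : ℝ), dist x y < fbd m n ∧ v = |f (x, s) - f (y, s)|}
    with hSdef
  have hSbdd : BddAbove S := by
    refine ⟨2 * ‖f‖, ?_⟩
    rintro v ⟨x, y, s, -, rfl⟩
    calc |f (x, s) - f (y, s)| ≤ ‖f (x, s)‖ + ‖f (y, s)‖ := by
          simpa using norm_sub_le (f (x, s)) (f (y, s))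
      _ ≤ ‖f‖ + ‖f‖ := add_le_add (f.norm_coe_le_norm _) (f.norm_coe_le_norm _)
      _ = 2 * ‖f‖ := by ring
  have hVar0 : 0 ≤ sSup S := Real.sSup_nonneg (by rintro v ⟨x, y, s, -, rfl⟩; positivity)
  have hA : ∀ (b : X) (t : ℝ), b ∉ Ω n m → Wop ν Υ Ω n m (Function.curry ⇑f) b t = 0 := by
    intro b t hb
    unfold Wop
    simp [Set.indicator_of_notMem hb]
  have hB : ∀ b ∈ Ω n m, ∀ t : ℝ,
      |Wop ν Υ Ω n m (Function.curry ⇑f) b t - f (b, t)| ≤ sSup S := by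
    intro b hb t
    have hmeasΥ : ∀ g : G, Measurable (fun b' => Υ n g b b') := fun g =>
      (hadm.meas_Υ n g).comp measurable_prodMk_left
    have hlin : ∀ g : G, (∫⁻ b', ENNReal.ofReal (Υ n g b b') ∂ν) ≤ 1 := by
      intro g; rw [← hadm.normalized n b]; exact ENNReal.le_tsum g
    have hIg : ∀ g : G, Integrable (fun b' => Υ n g b b') ν := by
      intro g
      refine ⟨(hmeasΥ g).aestronglyMeasurable, ?_⟩
      rw [hasFiniteIntegral_iff_norm]
      calc ∫⁻ b', ENNReal.ofReal ‖Υ n g b b'‖ ∂ν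
          = ∫⁻ b', ENNReal.ofReal (Υ n g b b') ∂ν := by
            congr 1; funext b'
            rw [Real.norm_eq_abs, abs_of_nonneg (hadm.nonneg_Υ n g b b')]
        _ ≤ 1 := hlin g
        _ < ⊤ := ENNReal.one_lt_top
    set aΥ : G → ℝ := fun g => (∫⁻ b', ENNReal.ofReal (Υ n g b b') ∂ν).toReal with haΥ
    have haint : ∀ g, ∫ b', Υ n g b b' ∂ν = aΥ g := by
      intro g
      rw [integral_eq_lintegral_of_nonneg_ae
        (Filter.Eventually.of_forall fun b' => hadm.nonneg_Υ n g b b')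
        (hmeasΥ g).aestronglyMeasurable]
    have hane : ∀ g : G, (∫⁻ b', ENNReal.ofReal (Υ n g b b') ∂ν) ≠ ⊤ := fun g =>
      ((hlin g).trans_lt ENNReal.one_lt_top).ne
    have hasum : Summable aΥ := ENNReal.summable_toReal
      (by rw [hadm.normalized n b]; exact ENNReal.one_ne_top)
    have hatsum : ∑' g, aΥ g = 1 := by
      rw [haΥ, ← ENNReal.tsum_toReal_eq hane, hadm.normalized n b, ENNReal.toReal_one]
    have hIf : ∀ g : G, Integrable (fun b' => Υ n g b b' * f (b', t)) ν := by
      intro g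
      have hc : Continuous (fun b' : X => f (b', t)) :=
        f.continuous.comp (continuous_id.prodMk continuous_const)
      have h := (hIg g).bdd_mul (c := ‖f‖) hc.aestronglyMeasurable
        (Filter.Eventually.of_forall fun x => f.norm_coe_le_norm _)
      simpa [mul_comm] using h
    have hkey : ∀ g : G, ‖∫ b', Υ n g b b' * (f (b', t) - f (b, t)) ∂ν‖ ≤ aΥ g * sSup S := by
      intro g
      calc ‖∫ b', Υ n g b b' * (f (b', t) - f (b, t)) ∂ν‖
          ≤ ∫ b', ‖Υ n g b b' * (f (b', t) - f (b, t))‖ ∂ν := norm_integral_le_integral_norm _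
        _ ≤ ∫ b', Υ n g b b' * sSup S ∂ν := by
            refine integral_mono_of_nonneg (Filter.Eventually.of_forall fun b' => norm_nonneg _)
              ((hIg g).mul_const _) (Filter.Eventually.of_forall fun b' => ?_)
            simp only [norm_mul, Real.norm_eq_abs]
            rw [abs_of_nonneg (hadm.nonneg_Υ n g b b')]
            rcases (hadm.nonneg_Υ n g b b').eq_or_lt with h0 | hpos
            · rw [← h0, zero_mul, zero_mul]
            · refine mul_le_mul_of_nonneg_left (le_csSup hSbdd ?_) (hadm.nonneg_Υ n g b b')
              exact ⟨b', b, t, by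
                have := (hadm.close n m g b b' hb hpos).1
                rwa [dist_comm], rfl⟩
        _ = aΥ g * sSup S := by rw [integral_mul_const, haint g]
    have hnormsum : Summable (fun g => ‖∫ b', Υ n g b b' * (f (b', t) - f (b, t)) ∂ν‖) :=
      Summable.of_nonneg_of_le (fun g => norm_nonneg _) hkey (hasum.mul_right _)
    have hsum1 : Summable (fun g => ∫ b', Υ n g b b' * f (b', t) ∂ν) := by
      refine Summable.of_norm_bounded (hasum.mul_right ‖f‖) fun g => ?_
      calc ‖∫ b', Υ n g b b' * f (b', t) ∂ν‖
          ≤ ∫ b', ‖Υ n g b b' * f (b', t)‖ ∂ν := norm_integral_le_integral_norm _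
        _ ≤ ∫ b', Υ n g b b' * ‖f‖ ∂ν := by
            refine integral_mono_of_nonneg (Filter.Eventually.of_forall fun b' => norm_nonneg _)
              ((hIg g).mul_const _) (Filter.Eventually.of_forall fun b' => ?_)
            simp only [norm_mul, Real.norm_eq_abs]
            rw [abs_of_nonneg (hadm.nonneg_Υ n g b b')]
            exact mul_le_mul_of_nonneg_left
              (Real.norm_eq_abs _ ▸ f.norm_coe_le_norm (b', t)) (hadm.nonneg_Υ n g b b')
        _ = aΥ g * ‖f‖ := by rw [integral_mul_const, haint g]
    have hsum2 : Summable (fun g : G => aΥ g * f (b, t)) := hasum.mul_right _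
    have hsplit : ∀ g : G, ∫ b', Υ n g b b' * (f (b', t) - f (b, t)) ∂ν
        = (∫ b', Υ n g b b' * f (b', t) ∂ν) - aΥ g * f (b, t) := by
      intro g
      calc ∫ b', Υ n g b b' * (f (b', t) - f (b, t)) ∂ν
          = ∫ b', (Υ n g b b' * f (b', t) - Υ n g b b' * f (b, t)) ∂ν := by
            congr 1; funext b'; ring
        _ = (∫ b', Υ n g b b' * f (b', t) ∂ν) - ∫ b', Υ n g b b' * f (b, t) ∂ν :=
            integral_sub (hIf g) ((hIg g).mul_const _)
        _ = (∫ b', Υ n g b b' * f (b', t) ∂ν) - aΥ g * f (b, t) := by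
            rw [integral_mul_const, haint g]
    have hWrw : Wop ν Υ Ω n m (Function.curry ⇑f) b t
        = ∑' g : G, ∫ b', Υ n g b b' * f (b', t) ∂ν := by
      unfold Wop
      refine tsum_congr fun g => ?_
      congr 1; funext b'
      simp [Set.indicator_of_mem hb, Function.curry]
    have hdiff : Wop ν Υ Ω n m (Function.curry ⇑f) b t - f (b, t)
        = ∑' g : G, ∫ b', Υ n g b b' * (f (b', t) - f (b, t)) ∂ν := by
      have h4 : ∑' g : G, ∫ b', Υ n g b b' * (f (b', t) - f (b, t)) ∂ν
          = (∑' g : G, ∫ b', Υ n g b b' * f (b', t) ∂ν) - ∑' g : G, aΥ g * f (b, t) := by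
        rw [← Summable.tsum_sub hsum1 hsum2]
        exact tsum_congr fun g => hsplit g
      rw [hWrw, h4, tsum_mul_right, hatsum, one_mul]
    rw [hdiff, ← Real.norm_eq_abs]
    calc ‖∑' g : G, ∫ b', Υ n g b b' * (f (b', t) - f (b, t)) ∂ν‖
        ≤ ∑' g : G, ‖∫ b', Υ n g b b' * (f (b', t) - f (b, t)) ∂ν‖ :=
          norm_tsum_le_tsum_norm hnormsum
      _ ≤ ∑' g : G, aΥ g * sSup S := Summable.tsum_le_tsum hkey hnormsum (hasum.mul_right _)
      _ = sSup S := by rw [tsum_mul_right, hatsum, one_mul]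
  refine ⟨hA, hB, ?_⟩
  have hmeasset : MeasurableSet ((Ω n m)ᶜ ×ˢ (Set.univ : Set ℝ)) :=
    ((hadm.closed_Ω n m).measurableSet.compl).prod MeasurableSet.univ
  set Γ : X × ℝ → ℝ := fun p =>
    sSup S + Set.indicator ((Ω n m)ᶜ ×ˢ (Set.univ : Set ℝ)) (fun _ => ‖f‖) p with hΓ
  have hΓint : Integrable Γ (ν.prod theta) :=
    (integrable_const _).add ((integrable_const ‖f‖).indicator hmeasset)
  have hpt : ∀ p : X × ℝ, |Wop ν Υ Ω n m (Function.curry ⇑f) p.1 p.2 - f p| ≤ Γ p := by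
    intro p
    by_cases hp : p.1 ∈ Ω n m
    · have h := hB p.1 hp p.2
      have hnm : p ∉ (Ω n m)ᶜ ×ˢ (Set.univ : Set ℝ) := fun hmem => hmem.1 hp
      rw [hΓ]
      simp only [Set.indicator_of_notMem hnm, add_zero]
      simpa using h
    · rw [hA p.1 p.2 hp]
      have hmem : p ∈ (Ω n m)ᶜ ×ˢ (Set.univ : Set ℝ) := ⟨hp, trivial⟩
      rw [hΓ]
      simp only [Set.indicator_of_mem hmem]
      have h1 : |0 - f p| = ‖f p‖ := by rw [zero_sub, abs_neg, Real.norm_eq_abs]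
      rw [h1]
      have := f.norm_coe_le_norm p
      linarith
  have hle : ∫ p, |Wop ν Υ Ω n m (Function.curry ⇑f) p.1 p.2 - f p| ∂(ν.prod theta)
      ≤ ∫ p, Γ p ∂(ν.prod theta) :=
    integral_mono_of_nonneg (Filter.Eventually.of_forall fun p => abs_nonneg _) hΓint
      (Filter.Eventually.of_forall hpt)
  have hΓval : ∫ p, Γ p ∂(ν.prod theta)
      = sSup S + ((ν.prod theta) ((Ω n m)ᶜ ×ˢ (Set.univ : Set ℝ))).toReal * ‖f‖ := by
    rw [hΓ, integral_add (integrable_const _) ((integrable_const ‖f‖).indicator hmeasset),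
      integral_const, integral_indicator_const _ hmeasset]
    simp [smul_eq_mul, measureReal_def]
  have hmb : ((ν.prod theta) ((Ω n m)ᶜ ×ˢ (Set.univ : Set ℝ))).toReal ≤ D m := by
    rw [Measure.prod_prod, measure_univ, mul_one]
    have h1 : ν ((Ω n m)ᶜ) = 1 - ν (Ω n m) := by
      rw [measure_compl (hadm.closed_Ω n m).measurableSet (measure_ne_top ν _), measure_univ]
    rw [h1, ENNReal.toReal_sub_of_le prob_le_one ENNReal.one_ne_top, ENNReal.toReal_one]
    have h2 : 1 - D m ≤ (ν (Ω n m)).toReal := by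
      rcases le_or_gt (1 - D m) 0 with h | h
      · exact h.trans ENNReal.toReal_nonneg
      · have h3 := ENNReal.toReal_mono (measure_ne_top ν _) (hadm.Ω_big n m).le
        rwa [ENNReal.toReal_ofReal h.le] at h3
    linarith
  calc ∫ p, |Wop ν Υ Ω n m (Function.curry ⇑f) p.1 p.2 - f p| ∂(ν.prod theta)
      ≤ ∫ p, Γ p ∂(ν.prod theta) := hle
    _ = sSup S + ((ν.prod theta) ((Ω n m)ᶜ ×ˢ (Set.univ : Set ℝ))).toReal * ‖f‖ := hΓval
    _ ≤ sSup S + D m * ‖f‖ := by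
        have := mul_le_mul_of_nonneg_right hmb (norm_nonneg f)
        linarith
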